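/- Let M be a compact metric space, M_f(M) the (nonempty, compact, convex) set of f-invariant Borel probability measures for a homeomorphism f, and h : M_f(M) → [0,∞) an affine, upper semicontinuous, bounded function. Define P(φ) = sup{h(μ) + ∫φ dμ : μ ∈ M_f(M)}. Then for every ν ∈ M_f(M): h(ν) = inf{P(φ) - ∫φ dν : φ ∈ C(M,ℝ)}. -/
import Mathlib


open MeasureTheory Filter Topology

/-- Every continuous linear functional on a product `ι → ℝ` is a finite linear
combination of coordinate evaluations. -/
lemma pi_dual_finite {ι : Type*} [DecidableEq ι] (g : (ι → ℝ) →L[ℝ] ℝ) :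
    ∃ I : Finset ι, ∀ x : ι → ℝ, g x = ∑ i ∈ I, g (Pi.single i 1) * x i := by
  have hmem : {x : ι → ℝ | |g x| < 1} ∈ 𝓝 (0 : ι → ℝ) := by
    have : ContinuousAt g 0 := g.continuous.continuousAt
    have h2 := this.preimage_mem_nhds (by simpa using Metric.ball_mem_nhds (0 : ℝ) one_pos)
    refine Filter.mem_of_superset h2 ?_
    intro x hx
    simpa [Metric.mem_ball, Real.dist_eq] using hx
  rw [nhds_pi, Filter.mem_pi] at hmem
  obtain ⟨I, hIfin, t, ht, hsub⟩ := hmem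
  have hker : ∀ x : ι → ℝ, (∀ i ∈ I, x i = 0) → g x = 0 := by
    intro x hx
    by_contra hgx
    obtain ⟨n, hn⟩ := exists_nat_gt (1 / |g x|)
    have hmemn : (n : ℝ) • x ∈ I.pi t := by
      intro i hi
      have : ((n : ℝ) • x) i = 0 := by simp [hx i hi]
      rw [this]
      exact mem_of_mem_nhds (ht i)
    have h1 : |g ((n : ℝ) • x)| < 1 := hsub hmemn
    rw [_root_.map_smul, smul_eq_mul, abs_mul, abs_of_nonneg (Nat.cast_nonneg n)] at h1
    have hpos : 0 < |g x| := abs_pos.mpr hgx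
    have : 1 / |g x| < n := hn
    have : 1 < n * |g x| := by
      rw [div_lt_iff₀ hpos] at this
      linarith
    linarith
  refine ⟨hIfin.toFinset, fun x => ?_⟩
  set y : ι → ℝ := ∑ i ∈ hIfin.toFinset, x i • (Pi.single i (1 : ℝ) : ι → ℝ) with hy
  have hxy : g (x - y) = 0 := by
    apply hker
    intro i hi
    have hyi : y i = x i := by
      rw [hy]
      rw [Finset.sum_apply]
      rw [Finset.sum_eq_single i]
      · simp
      · intro j hj hji
        simp [Pi.single_apply, hji]
      · intro hni
        exact absurd (hIfin.mem_toFinset.mpr hi) hni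
    simp [hyi]
  have : g x = g y := by
    have := map_sub g x y
    rw [hxy] at this
    linarith [this]
  rw [this, hy, map_sum]
  congr 1
  ext i
  rw [_root_.map_smul, smul_eq_mul, mul_comm]


/-- Theorem D(2) in abstract form: if `h` is affine, bounded, nonnegative and upper
semicontinuous (weak* topology) on the nonempty set of `f`-invariant probability
measures, and `P(φ) = sup { h(μ) + ∫ φ dμ }`, then for every invariant `ν`,
`h(ν) = inf { P(φ) - ∫ φ dν : φ ∈ C(M,ℝ) }`. -/
theorem stmt_12 {M : Type*} [MetricSpace M] [CompactSpace M]
    [MeasurableSpace M] [BorelSpace M]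
    (f : M ≃ₜ M)
    (Minv : Set (ProbabilityMeasure M))
    (hMinv : Minv = {μ : ProbabilityMeasure M |
      Measure.map f μ.toMeasure = μ.toMeasure})
    (hne : Minv.Nonempty)
    (h : ProbabilityMeasure M → ℝ)
    (hpos : ∀ μ ∈ Minv, 0 ≤ h μ)
    (hbdd : ∃ C : ℝ, ∀ μ ∈ Minv, h μ ≤ C)
    (haff : ∀ μ ∈ Minv, ∀ ν ∈ Minv, ∀ ρ ∈ Minv, ∀ a b : ℝ, 0 ≤ a → 0 ≤ b →
      a + b = 1 →
      ρ.toMeasure = ENNReal.ofReal a • μ.toMeasure + ENNReal.ofReal b • ν.toMeasure →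
      h ρ = a * h μ + b * h ν)
    (husc : UpperSemicontinuousOn h Minv)
    (P : C(M, ℝ) → ℝ)
    (hP : ∀ φ : C(M, ℝ),
      IsLUB {x : ℝ | ∃ μ ∈ Minv, x = h μ + ∫ y, φ y ∂(μ : Measure M)} (P φ)) :
    ∀ ν ∈ Minv,
      IsGLB {x : ℝ | ∃ φ : C(M, ℝ), x = P φ - ∫ y, φ y ∂(ν : Measure M)} (h ν) := by
  intro ν hν
  have hint : ∀ (φ : C(M, ℝ)) (μ : ProbabilityMeasure M),
      Integrable (fun y => φ y) (μ : Measure M) := fun φ μ =>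
    φ.continuous.integrable_of_hasCompactSupport (HasCompactSupport.of_compactSpace _)
  constructor
  · -- lower bound
    rintro x ⟨φ, rfl⟩
    have := (hP φ).1 ⟨ν, hν, rfl⟩
    linarith
  · -- greatest among lower bounds
    intro b hb
    by_contra hcon
    push_neg at hcon
    -- set-up
    set L : ProbabilityMeasure M × ℝ → (C(M, ℝ) → ℝ) × ℝ :=
      fun p => ((fun φ : C(M, ℝ) => ∫ y, φ y ∂(p.1 : Measure M)), p.2) with hL
    set K : Set (ProbabilityMeasure M × ℝ) :=
      {p | p.1 ∈ Minv ∧ 0 ≤ p.2 ∧ p.2 ≤ h p.1} with hKdef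
    set S : Set ((C(M, ℝ) → ℝ) × ℝ) := L '' K with hSdef
    set x₀ : (C(M, ℝ) → ℝ) × ℝ := ((fun φ : C(M, ℝ) => ∫ y, φ y ∂(ν : Measure M)), b)
      with hx₀def
    -- convex combinations of invariant measures
    have hcomb : ∀ μ1 ∈ Minv, ∀ μ2 ∈ Minv, ∀ a c : ℝ, 0 ≤ a → 0 ≤ c → a + c = 1 →
        ∃ ρ ∈ Minv,
          ρ.toMeasure = ENNReal.ofReal a • μ1.toMeasure + ENNReal.ofReal c • μ2.toMeasure ∧
          ∀ φ : C(M, ℝ), ∫ y, φ y ∂(ρ : Measure M)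
            = a * ∫ y, φ y ∂(μ1 : Measure M) + c * ∫ y, φ y ∂(μ2 : Measure M) := by
      intro μ1 hμ1 μ2 hμ2 a c ha hc hac
      set m : Measure M := ENNReal.ofReal a • μ1.toMeasure + ENNReal.ofReal c • μ2.toMeasure
        with hm
      have hprob : IsProbabilityMeasure m := by
        constructor
        rw [hm]
        simp only [Measure.add_apply, Measure.smul_apply, smul_eq_mul, measure_univ, mul_one]
        rw [← ENNReal.ofReal_add ha hc, hac, ENNReal.ofReal_one]
      refine ⟨⟨m, hprob⟩, ?_, rfl, ?_⟩
      · rw [hMinv]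
        rw [hMinv] at hμ1 hμ2
        show Measure.map f m = m
        rw [hm, Measure.map_add _ _ f.continuous.measurable, Measure.map_smul,
          Measure.map_smul, hμ1, hμ2]
      · intro φ
        show ∫ y, φ y ∂m = _
        rw [hm, integral_add_measure ((hint φ μ1).smul_measure ENNReal.ofReal_ne_top)
          ((hint φ μ2).smul_measure ENNReal.ofReal_ne_top),
          integral_smul_measure, integral_smul_measure,
          ENNReal.toReal_ofReal ha, ENNReal.toReal_ofReal hc, smul_eq_mul, smul_eq_mul]
    -- convexity of S
    have hSconv : Convex ℝ S := by
      rintro x ⟨⟨μ1, t1⟩, ⟨hμ1, ht10, ht1h⟩, rfl⟩ y ⟨⟨μ2, t2⟩, ⟨hμ2, ht20, ht2h⟩, rfl⟩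
        a c ha hc hac
      obtain ⟨ρ, hρ, hρm, hρint⟩ := hcomb μ1 hμ1 μ2 hμ2 a c ha hc hac
      have hhρ := haff μ1 hμ1 μ2 hμ2 ρ hρ a c ha hc hac hρm
      refine ⟨(ρ, a * t1 + c * t2), ⟨hρ, ?_, ?_⟩, ?_⟩
      · positivity
      · rw [hhρ]
        exact add_le_add (mul_le_mul_of_nonneg_left ht1h ha)
          (mul_le_mul_of_nonneg_left ht2h hc)
      · refine Prod.ext ?_ ?_
        · funext φ
          simp only [hL, Prod.fst_add, Prod.smul_fst, Pi.add_apply, Pi.smul_apply,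
            smul_eq_mul]
          exact hρint φ
        · simp [hL, smul_eq_mul]
    -- x₀ is not in the closure of S
    have hx₀ : x₀ ∉ closure S := by
      intro hmem
      set G : Filter (ProbabilityMeasure M × ℝ) := Filter.comap L (𝓝 x₀) ⊓ 𝓟 K with hG
      have hGne : G.NeBot := by
        rw [hG, Filter.inf_principal_neBot_iff]
        intro U hU
        obtain ⟨V, hV, hVU⟩ := Filter.mem_comap.mp hU
        obtain ⟨z, hzV, hzS⟩ := mem_closure_iff_nhds.mp hmem V hV
        obtain ⟨p, hpK, rfl⟩ := hzS
        exact ⟨p, hVU hzV, hpK⟩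
      have hLG : Tendsto L G (𝓝 x₀) := tendsto_comap.mono_left inf_le_left
      have hK_G : ∀ᶠ p in G, p ∈ K :=
        Filter.eventually_inf_principal.mpr (Filter.Eventually.of_forall fun p hp => hp)
      have hsnd : Tendsto (fun p : ProbabilityMeasure M × ℝ => p.2) G (𝓝 b) := by
        have : Tendsto (fun p => (L p).2) G (𝓝 x₀.2) :=
          (continuous_snd.tendsto x₀).comp hLG
        simpa [hL, hx₀def] using this
      have hfst : Tendsto (fun p : ProbabilityMeasure M × ℝ => p.1) G (𝓝 ν) := by
        rw [ProbabilityMeasure.tendsto_iff_forall_integral_tendsto]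
        intro g
        have : Tendsto (fun p => (L p).1 g.toContinuousMap) G (𝓝 (x₀.1 g.toContinuousMap)) :=
          ((continuous_apply g.toContinuousMap).tendsto x₀.1).comp
            ((continuous_fst.tendsto x₀).comp hLG)
        simpa [hL, hx₀def] using this
      set y0 : ℝ := (h ν + b) / 2 with hy0
      have hy1 : h ν < y0 := by rw [hy0]; linarith
      have hy2 : y0 < b := by rw [hy0]; linarith
      have husc' := husc ν hν y0 hy1
      have hfst' : Tendsto (fun p : ProbabilityMeasure M × ℝ => p.1) G (𝓝[Minv] ν) := by
        rw [tendsto_nhdsWithin_iff]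
        exact ⟨hfst, hK_G.mono fun p hp => hp.1⟩
      have hev1 : ∀ᶠ p in G, h p.1 < y0 := hfst'.eventually husc'
      have hev2 : ∀ᶠ p in G, p.2 ≤ h p.1 := hK_G.mono fun p hp => hp.2.2
      have hev3 : ∀ᶠ p in G, y0 < p.2 := hsnd.eventually (eventually_gt_nhds hy2)
      obtain ⟨p, h1, h2, h3⟩ := (hev1.and (hev2.and hev3)).exists
      linarith
    -- separation
    obtain ⟨F, u, hFS, hFx⟩ :=
      _root_.geometric_hahn_banach_closed_point hSconv.closure isClosed_closure hx₀
    set d : ℝ := F (0, 1) with hd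
    set g : ((C(M, ℝ) → ℝ)) →L[ℝ] ℝ := F.comp (ContinuousLinearMap.inl ℝ _ _) with hgdef
    have hFdec : ∀ (x : C(M, ℝ) → ℝ) (t : ℝ), F (x, t) = g x + t * d := by
      intro x t
      have hxt : (x, t) = (x, (0 : ℝ)) + t • ((0 : C(M, ℝ) → ℝ), (1 : ℝ)) := by
        ext <;> simp
      rw [hxt, map_add, _root_.map_smul, smul_eq_mul]
      rfl
    letI : DecidableEq C(M, ℝ) := Classical.decEq _
    obtain ⟨I, hI⟩ := pi_dual_finite g
    set ψ : C(M, ℝ) := ∑ φ ∈ I, g (Pi.single φ 1) • φ with hψdef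
    have hψint : ∀ μ : ProbabilityMeasure M,
        g (fun φ : C(M, ℝ) => ∫ y, φ y ∂(μ : Measure M)) = ∫ y, ψ y ∂(μ : Measure M) := by
      intro μ
      rw [hI]
      have hcoe : ∀ y : M, ψ y = ∑ φ ∈ I, g (Pi.single φ 1) * φ y := by
        intro y
        rw [hψdef]
        simp
      rw [show (fun y => ψ y) = fun y => ∑ φ ∈ I, g (Pi.single φ 1) * φ y from funext hcoe]
      rw [integral_finset_sum I (fun φ _ => (hint φ μ).const_mul _)]
      congr 1
      ext φ
      rw [integral_const_mul]
    -- key inequalities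
    have hkey : ∀ μ ∈ Minv, ∀ t : ℝ, 0 ≤ t → t ≤ h μ →
        ∫ y, ψ y ∂(μ : Measure M) + t * d < u := by
      intro μ hμ t ht0 hth
      have hmemS : L (μ, t) ∈ closure S := subset_closure ⟨(μ, t), ⟨hμ, ht0, hth⟩, rfl⟩
      have := hFS _ hmemS
      rw [show L (μ, t) = ((fun φ : C(M, ℝ) => ∫ y, φ y ∂(μ : Measure M)), t) from rfl,
        hFdec, hψint μ] at this
      exact this
    have hFx' : u < ∫ y, ψ y ∂(ν : Measure M) + b * d := by
      rw [hx₀def, hFdec, hψint ν] at hFx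
      exact hFx
    have hν0 : ∫ y, ψ y ∂(ν : Measure M) < u := by
      have := hkey ν hν 0 le_rfl (hpos ν hν)
      simpa using this
    have hb0 : 0 < b := lt_of_le_of_lt (hpos ν hν) hcon
    have hdpos : 0 < d := by nlinarith
    -- final contradiction via φ̂ = d⁻¹ • ψ
    set φh : C(M, ℝ) := d⁻¹ • ψ with hφh
    have hφhint : ∀ μ : ProbabilityMeasure M,
        ∫ y, φh y ∂(μ : Measure M) = d⁻¹ * ∫ y, ψ y ∂(μ : Measure M) := by
      intro μ
      rw [hφh]
      simp only [ContinuousMap.coe_smul, Pi.smul_apply, smul_eq_mul]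
      rw [integral_const_mul]
    have hPub : P φh ≤ u / d := by
      refine (hP φh).2 ?_
      rintro x ⟨μ, hμ, rfl⟩
      rw [hφhint μ]
      have hk := hkey μ hμ (h μ) (hpos μ hμ) le_rfl
      have hdd : d * d⁻¹ = 1 := mul_inv_cancel₀ hdpos.ne'
      rw [div_eq_mul_inv]
      have h2 := mul_lt_mul_of_pos_right hk (inv_pos.mpr hdpos)
      rw [add_mul, mul_assoc, hdd, mul_one] at h2
      have h3 : d⁻¹ * ∫ y, ψ y ∂(μ : Measure M) = (∫ y, ψ y ∂(μ : Measure M)) * d⁻¹ :=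
        mul_comm _ _
      linarith
    have hlow : b ≤ P φh - ∫ y, φh y ∂(ν : Measure M) := hb ⟨φh, rfl⟩
    have hup : u / d < ∫ y, φh y ∂(ν : Measure M) + b := by
      rw [hφhint ν, div_eq_mul_inv]
      have hdd : d * d⁻¹ = 1 := mul_inv_cancel₀ hdpos.ne'
      have h2 := mul_lt_mul_of_pos_right hFx' (inv_pos.mpr hdpos)
      rw [add_mul, mul_assoc, hdd, mul_one] at h2
      have h3 : d⁻¹ * ∫ y, ψ y ∂(ν : Measure M) = (∫ y, ψ y ∂(ν : Measure M)) * d⁻¹ :=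
        mul_comm _ _
      linarith
    linarith
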